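/- Let γ ≥ 0 and m > 0, and define f(θ) = −(1−cos θ)²/sin³θ + (1 + γ cos θ) sin θ/m² for θ ∈ (0, π). Then lim_{θ→0⁺} f(θ)/θ = (1+γ)/m² − 1/4; in particular this limit is positive if and only if m² < 4(1+γ), so that the trivial equilibrium θ = 0 of the system θ' = p_θ, p_θ' = f(θ) is a hyperbolic saddle precisely when 0 < m² < 4(1+γ). -/

import Mathlib

open Real Filter

lemma sin_div_lim : Tendsto (fun θ : ℝ => Real.sin θ / θ) (nhdsWithin 0 {(0:ℝ)}ᶜ) (nhds 1) := by
  have h := (hasDerivAt_sin 0)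
  rw [hasDerivAt_iff_tendsto_slope] at h
  simp only [Real.cos_zero] at h
  refine h.congr fun θ => ?_
  simp [slope_def_field, div_eq_div_iff]

lemma one_sub_cos_lim :
    Tendsto (fun θ : ℝ => (1 - Real.cos θ) / θ ^ 2) (nhdsWithin 0 {(0:ℝ)}ᶜ) (nhds (1/2)) := by
  have hhalf : Tendsto (fun θ : ℝ => θ / 2) (nhdsWithin 0 {(0:ℝ)}ᶜ) (nhdsWithin 0 {(0:ℝ)}ᶜ) := by
    apply Tendsto.inf
    · simpa using (continuous_id.div_const 2).tendsto' 0 0 (by norm_num)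
    · refine tendsto_principal_principal.2 fun x hx => ?_
      simp only [Set.mem_compl_iff, Set.mem_singleton_iff] at *
      intro h; exact hx (by linarith)
  have h2 : Tendsto (fun θ : ℝ => Real.sin (θ/2) / (θ/2)) (nhdsWithin 0 {(0:ℝ)}ᶜ) (nhds 1) :=
    sin_div_lim.comp hhalf
  have h3 : Tendsto (fun θ : ℝ => (Real.sin (θ/2) / (θ/2))^2 / 2) (nhdsWithin 0 {(0:ℝ)}ᶜ)
      (nhds (1/2)) := by
    have := (h2.pow 2).div_const 2
    simpa using this
  refine h3.congr' ?_
  filter_upwards [self_mem_nhdsWithin] with θ hθ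
  have hθ0 : θ ≠ 0 := hθ
  have hc : Real.cos θ = 1 - 2 * Real.sin (θ/2) ^ 2 := by
    have h1 : Real.cos θ = 2 * Real.cos (θ/2) ^ 2 - 1 := by
      rw [← Real.cos_two_mul]; congr 1; ring
    have h2 := Real.sin_sq_add_cos_sq (θ/2)
    linarith
  rw [hc]
  field_simp
  ring

theorem linearisation_at_trivial_equilibrium (γ m : ℝ) (hγ : 0 ≤ γ) (hm : 0 < m)
    (f : ℝ → ℝ)
    (hf : ∀ θ, f θ = -(1 - cos θ) ^ 2 / (sin θ) ^ 3 + (1 + γ * cos θ) * sin θ / m ^ 2) :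
    Tendsto (fun θ => f θ / θ) (nhdsWithin 0 (Set.Ioi 0))
        (nhds ((1 + γ) / m ^ 2 - 1 / 4)) ∧
      (0 < (1 + γ) / m ^ 2 - 1 / 4 ↔ m ^ 2 < 4 * (1 + γ)) := by
  have hm2 : (0:ℝ) < m ^ 2 := by positivity
  constructor
  · -- restrict limits to Ioi 0
    have hsub : nhdsWithin (0:ℝ) (Set.Ioi 0) ≤ nhdsWithin 0 {(0:ℝ)}ᶜ :=
      nhdsWithin_mono 0 (fun x hx => ne_of_gt hx)
    have hs : Tendsto (fun θ : ℝ => Real.sin θ / θ) (nhdsWithin 0 (Set.Ioi 0)) (nhds 1) :=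
      sin_div_lim.mono_left hsub
    have hc : Tendsto (fun θ : ℝ => (1 - Real.cos θ) / θ ^ 2) (nhdsWithin 0 (Set.Ioi 0))
        (nhds (1/2)) := one_sub_cos_lim.mono_left hsub
    have hcos : Tendsto (fun θ : ℝ => Real.cos θ) (nhdsWithin 0 (Set.Ioi 0)) (nhds 1) := by
      simpa using (Real.continuous_cos.tendsto' 0 1 (by simp)).mono_left nhdsWithin_le_nhds
    -- the combined expression
    have hmain : Tendsto (fun θ : ℝ =>
        -((1 - Real.cos θ) / θ ^ 2) ^ 2 / (Real.sin θ / θ) ^ 3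
          + (1 + γ * Real.cos θ) * (Real.sin θ / θ) / m ^ 2)
        (nhdsWithin 0 (Set.Ioi 0)) (nhds ((1 + γ) / m ^ 2 - 1 / 4)) := by
      have h1 : Tendsto (fun θ : ℝ => -((1 - Real.cos θ) / θ ^ 2) ^ 2 / (Real.sin θ / θ) ^ 3)
          (nhdsWithin 0 (Set.Ioi 0)) (nhds (-(1/2:ℝ)^2 / 1^3)) :=
        ((hc.pow 2).neg).div (hs.pow 3) (by norm_num)
      have h2 : Tendsto (fun θ : ℝ => (1 + γ * Real.cos θ) * (Real.sin θ / θ) / m ^ 2)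
          (nhdsWithin 0 (Set.Ioi 0)) (nhds ((1 + γ * 1) * 1 / m ^ 2)) :=
        (((tendsto_const_nhds.add (hcos.const_mul γ)).mul hs)).div_const _
      have := h1.add h2
      convert this using 2
      ring
    refine hmain.congr' ?_
    have hmem : Set.Ioo (0:ℝ) π ∈ nhdsWithin (0:ℝ) (Set.Ioi 0) := by
      refine mem_nhdsWithin.2 ⟨Set.Iio π, isOpen_Iio, by simpa using Real.pi_pos, ?_⟩
      rintro x ⟨hx1, hx2⟩
      exact ⟨hx2, hx1⟩
    filter_upwards [hmem] with θ hθ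
    have hθ0 : θ ≠ 0 := ne_of_gt hθ.1
    have hsin : Real.sin θ ≠ 0 := ne_of_gt (Real.sin_pos_of_pos_of_lt_pi hθ.1 hθ.2)
    rw [hf θ]
    field_simp
  · rw [sub_pos, div_lt_div_iff₀ (by norm_num) hm2]
    constructor <;> intro h <;> linarith
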